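/- Let u_T : ℝⁿ → ℝ be Lipschitz, set f(x) := u_T(x) − ⟨A⁻¹x, x⟩/(2T), and let f* be the concave envelope of f. Then the function u_T^* := S_T^+(S_T^- u_T) satisfies u_T^*(x) = f*(x) + ⟨A⁻¹x, x⟩/(2T) for all x ∈ ℝⁿ. -/

import Mathlib

open scoped RealInnerProductSpace
open Filter

noncomputable section

/-- `n`-dimensional Euclidean space. -/
abbrev Euc (n : ℕ) := EuclideanSpace ℝ (Fin n)

/-- A real-valued function on `ℝⁿ` is Lipschitz (with some constant). -/
def IsLip {n : ℕ} (f : Euc n → ℝ) : Prop := ∃ K : NNReal, LipschitzWith K f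

/-- The quadratic form `q ↦ ⟨M q, q⟩` associated to a matrix `M`. -/
def quadA {n : ℕ} (M : Matrix (Fin n) (Fin n) ℝ) (q : Euc n) : ℝ :=
  ⟪(Matrix.toEuclideanLin M) q, q⟫

/-- The forward Hopf–Lax operator for the quadratic Hamiltonian `H(p) = ⟨A p, p⟩/2`:
`(S_T^+ g)(x) = inf_y [g(y) + ⟨A⁻¹(x-y), x-y⟩/(2T)]`. -/
def SplusQ {n : ℕ} (T : ℝ) (A : Matrix (Fin n) (Fin n) ℝ) (g : Euc n → ℝ) (x : Euc n) : ℝ :=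
  ⨅ y : Euc n, (g y + quadA A⁻¹ (x - y) / (2 * T))

/-- The backward operator for the quadratic Hamiltonian:
`(S_T^- g)(x) = sup_y [g(y) - ⟨A⁻¹(y-x), y-x⟩/(2T)]`. -/
def SminusQ {n : ℕ} (T : ℝ) (A : Matrix (Fin n) (Fin n) ℝ) (g : Euc n → ℝ) (x : Euc n) : ℝ :=
  ⨆ y : Euc n, (g y - quadA A⁻¹ (y - x) / (2 * T))

/-- The concave envelope of `f`:
`f*(x) = inf { v(x) : v concave on ℝⁿ and v ≥ f everywhere }`. -/
def concaveEnvelope {n : ℕ} (f : Euc n → ℝ) (x : Euc n) : ℝ :=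
  ⨅ v : {v : Euc n → ℝ // ConcaveOn ℝ Set.univ v ∧ ∀ y : Euc n, f y ≤ v y}, v.1 x

lemma quad_bound (a m t : ℝ) (hm : 0 < m) : a * t - m * t ^ 2 ≤ a ^ 2 / (4 * m) := by
  rw [le_div_iff₀ (by positivity : (0:ℝ) < 4 * m)]
  nlinarith [sq_nonneg (2 * m * t - a)]

lemma bdd_of_bound {n : ℕ} {g : Euc n → ℝ} (C : ℝ) (h : ∀ z, g z ≤ C) :
    BddAbove (Set.range g) := ⟨C, by rintro _ ⟨z, rfl⟩; exact h z⟩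

lemma ciSup_add_real {ι : Type*} [Nonempty ι] (f : ι → ℝ) (hf : BddAbove (Set.range f)) (c : ℝ) :
    (⨆ i, f i) + c = ⨆ i, (f i + c) :=
  Monotone.map_ciSup_of_continuousAt (continuousAt_id.add continuousAt_const)
    (fun a b h => by simpa using add_le_add_right h c) hf

lemma ciInf_add_real {ι : Type*} [Nonempty ι] (f : ι → ℝ) (hf : BddBelow (Set.range f)) (c : ℝ) :
    (⨅ i, f i) + c = ⨅ i, (f i + c) :=
  Monotone.map_ciInf_of_continuousAt (continuousAt_id.add continuousAt_const)
    (fun a b h => by simpa using add_le_add_right h c) hf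

lemma quadA_inner_sym {n : ℕ} {B : Matrix (Fin n) (Fin n) ℝ} (hB : B.IsHermitian)
    (x y : Euc n) : ⟪Matrix.toEuclideanLin B x, y⟫ = ⟪x, Matrix.toEuclideanLin B y⟫ :=
  (Matrix.isHermitian_iff_isSymmetric.mp hB) x y

lemma quadA_sub {n : ℕ} {B : Matrix (Fin n) (Fin n) ℝ} (hB : B.IsHermitian) (a b : Euc n) :
    quadA B (a - b) = quadA B a - 2 * ⟪Matrix.toEuclideanLin B a, b⟫ + quadA B b := by
  have h1 : ⟪Matrix.toEuclideanLin B b, a⟫ = ⟪Matrix.toEuclideanLin B a, b⟫ := by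
    rw [quadA_inner_sym hB, real_inner_comm]
  simp only [quadA, map_sub, inner_sub_left, inner_sub_right]
  linarith

lemma quadA_pos {n : ℕ} {B : Matrix (Fin n) (Fin n) ℝ} (hB : B.PosDef) {z : Euc n}
    (hz : z ≠ 0) : 0 < quadA B z := by
  have h := hB.dotProduct_mulVec_pos (x := (WithLp.equiv 2 (Fin n → ℝ)) z) (by simpa using hz)
  simp only [quadA, Matrix.toEuclideanLin_apply, EuclideanSpace.inner_eq_star_dotProduct,
    star_trivial] at *
  exact h

lemma quadA_smul {n : ℕ} (B : Matrix (Fin n) (Fin n) ℝ) (c : ℝ) (w : Euc n) :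
    quadA B (c • w) = c ^ 2 * quadA B w := by
  simp only [quadA, map_smul, real_inner_smul_left, real_inner_smul_right]
  ring

lemma quadA_coercive {n : ℕ} (hn : 0 < n) {B : Matrix (Fin n) (Fin n) ℝ} (hB : B.PosDef) :
    ∃ m : ℝ, 0 < m ∧ ∀ z : Euc n, m * ‖z‖ ^ 2 ≤ quadA B z := by
  haveI : Nontrivial (Euc n) := Module.nontrivial_of_finrank_pos (R := ℝ)
    (by rw [finrank_euclideanSpace_fin]; exact hn)
  have hcont : Continuous (fun z : Euc n => quadA B z) :=
    ((Matrix.toEuclideanLin B).continuous_of_finiteDimensional).inner continuous_id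
  obtain ⟨z₀, hz₀, hmin⟩ := (isCompact_sphere (0 : Euc n) 1).exists_isMinOn
    (NormedSpace.sphere_nonempty.mpr zero_le_one) hcont.continuousOn
  have hz₀norm : ‖z₀‖ = 1 := by simpa using (mem_sphere_zero_iff_norm.mp hz₀)
  have hz₀ne : z₀ ≠ 0 := by intro h; rw [h] at hz₀norm; simp at hz₀norm
  refine ⟨quadA B z₀, quadA_pos hB hz₀ne, fun z => ?_⟩
  rcases eq_or_ne z 0 with rfl | hz
  · simp [quadA]
  · have hnz : (0:ℝ) < ‖z‖ := norm_pos_iff.mpr hz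
    have hw : (‖z‖⁻¹ • z) ∈ Metric.sphere (0 : Euc n) 1 := by
      simp [norm_smul, abs_of_pos (inv_pos.mpr hnz), inv_mul_cancel₀ hnz.ne']
    have h1 : quadA B z₀ ≤ quadA B (‖z‖⁻¹ • z) := hmin hw
    have h2 : quadA B (‖z‖⁻¹ • z) = ‖z‖⁻¹ ^ 2 * quadA B z := quadA_smul _ _ _
    rw [h2] at h1
    have : quadA B z₀ * ‖z‖ ^ 2 ≤ ‖z‖⁻¹ ^ 2 * quadA B z * ‖z‖ ^ 2 :=
      mul_le_mul_of_nonneg_right h1 (by positivity)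
    calc quadA B z₀ * ‖z‖ ^ 2 ≤ ‖z‖⁻¹ ^ 2 * quadA B z * ‖z‖ ^ 2 := this
      _ = quadA B z := by field_simp

lemma toEuclideanLin_surj {n : ℕ} {B : Matrix (Fin n) (Fin n) ℝ} (hB : B.PosDef) :
    Function.Surjective (Matrix.toEuclideanLin B) := by
  rw [← LinearMap.injective_iff_surjective]
  intro a b hab
  have h : Matrix.toEuclideanLin B (a - b) = 0 := by rw [map_sub, hab, sub_self]
  by_contra hne
  have : a - b ≠ 0 := sub_ne_zero.mpr (fun h' => hne (by rw [h']))
  have hpos := quadA_pos hB this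
  rw [quadA, h, inner_zero_left] at hpos
  exact lt_irrefl _ hpos

lemma exists_supergradient {n : ℕ} {v : Euc n → ℝ} (hv : ConcaveOn ℝ Set.univ v) (x : Euc n) :
    ∃ p : Euc n, ∀ z, v z ≤ v x + ⟪p, z - x⟫ := by
  have hvc : Continuous v := by
    have h := hv.continuousOn isOpen_univ
    rwa [continuousOn_univ] at h
  set S : Set (Euc n × ℝ) := {w | w.2 < v w.1} with hS
  have hSopen : IsOpen S := isOpen_lt continuous_snd (hvc.comp continuous_fst)
  have hSconv : Convex ℝ S := by
    rintro ⟨a1, a2⟩ ha ⟨b1, b2⟩ hb θ μ hθ hμ hsum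
    simp only [hS, Set.mem_setOf_eq] at ha hb ⊢
    have hcv := hv.2 (Set.mem_univ a1) (Set.mem_univ b1) hθ hμ hsum
    simp only [smul_eq_mul] at hcv ⊢
    have : θ * a2 + μ * b2 < θ * v a1 + μ * v b1 := by
      rcases eq_or_lt_of_le hθ with h0 | h0
      · have hμ1 : μ = 1 := by linarith
        rw [← h0, hμ1]; simpa using hb
      · have h1 : θ * a2 < θ * v a1 := by nlinarith
        have h2 : μ * b2 ≤ μ * v b1 := mul_le_mul_of_nonneg_left hb.le hμ
        linarith
    exact lt_of_lt_of_le this hcv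
  have hdisj : Disjoint S {(x, v x)} := by
    rw [Set.disjoint_singleton_right]
    simp [hS]
  obtain ⟨F, u, hFS, hFt⟩ := geometric_hahn_banach_open hSconv hSopen
    (convex_singleton _) hdisj
  have hFx : u ≤ F (x, v x) := hFt _ rfl
  set c : ℝ := F (0, 1) with hc_def
  have hsplit : ∀ (z : Euc n) (t : ℝ), F (z, t) = F (z, 0) + t * c := by
    intro z t
    have h : (z, t) = (z, (0:ℝ)) + t • ((0 : Euc n), (1:ℝ)) := by
      simp [Prod.ext_iff]
    rw [h, map_add, map_smul, smul_eq_mul]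
  have hcpos : 0 < c := by
    have h := hFS (x, v x - 1) (by simp [hS])
    rw [hsplit] at h hFx
    have hexp : (v x - 1) * c = v x * c - c := by ring
    linarith
  rw [hsplit] at hFx
  have key : ∀ z, F (z, 0) + v z * c ≤ u := by
    intro z
    by_contra hcon
    push_neg at hcon
    set d := (F (z, 0) + v z * c - u) / (2 * c) with hd_def
    have hdpos : 0 < d := div_pos (by linarith) (by linarith)
    have hdc : d * c = (F (z, 0) + v z * c - u) / 2 := by
      rw [hd_def]; field_simp
    have h := hFS (z, v z - d) (by
      simp only [hS, Set.mem_setOf_eq]; linarith [hdpos])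
    rw [hsplit] at h
    have hexp : (v z - d) * c = v z * c - d * c := by ring
    linarith
  set p0 : Euc n := (InnerProductSpace.toDual ℝ (Euc n)).symm
    (F.comp (ContinuousLinearMap.inl ℝ (Euc n) ℝ)) with hp0
  have hinner : ∀ w : Euc n, ⟪p0, w⟫ = F (w, 0) := by
    intro w
    rw [hp0, InnerProductSpace.toDual_symm_apply]
    rfl
  refine ⟨-(1 / c) • p0, fun z => ?_⟩
  have h1 := key z
  have h3 : F (z, 0) + v z * c ≤ F (x, 0) + v x * c := le_trans h1 hFx
  have h2 : ⟪-(1 / c) • p0, z - x⟫ = (F (x, 0) - F (z, 0)) / c := by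
    rw [real_inner_smul_left, inner_sub_right, hinner, hinner]
    field_simp
    ring
  rw [h2, ← sub_le_iff_le_add', le_div_iff₀ hcpos]
  nlinarith [h3]

lemma affine_concave {n : ℕ} (p : Euc n) (C : ℝ) :
    ConcaveOn ℝ Set.univ (fun w : Euc n => C - ⟪p, w⟫) := by
  refine ⟨convex_univ, fun a _ b _ θ μ hθ hμ hsum => le_of_eq ?_⟩
  simp only [smul_eq_mul, inner_add_right, real_inner_smul_right]
  linear_combination C * hsum

lemma env_eq_inf_sup {n : ℕ} (f : Euc n → ℝ)
    (hbdd : ∀ p x : Euc n, BddAbove (Set.range fun z => f z + ⟪p, z - x⟫)) (x : Euc n) :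
    concaveEnvelope f x = ⨅ p : Euc n, ⨆ z : Euc n, (f z + ⟪p, z - x⟫) := by
  -- lower bound for each Φ p
  have hPhi_lb : ∀ p : Euc n, f x ≤ ⨆ z : Euc n, (f z + ⟪p, z - x⟫) := by
    intro p
    have := le_ciSup (hbdd p x) x
    simpa using this
  have hPhi_bdd : BddBelow (Set.range fun p : Euc n => ⨆ z : Euc n, (f z + ⟪p, z - x⟫)) :=
    ⟨f x, by rintro _ ⟨p, rfl⟩; exact hPhi_lb p⟩
  -- the subtype of concave majorants is nonempty
  obtain ⟨M, hM⟩ := hbdd 0 x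
  have hMf : ∀ y, f y ≤ M := by
    intro y
    have : f y + ⟪(0 : Euc n), y - x⟫ ≤ M := hM ⟨y, rfl⟩
    simpa using this
  haveI hne : Nonempty {v : Euc n → ℝ // ConcaveOn ℝ Set.univ v ∧ ∀ y : Euc n, f y ≤ v y} :=
    ⟨⟨fun _ => M, concaveOn_const M convex_univ, hMf⟩⟩
  have henv_bdd : BddBelow (Set.range fun v : {v : Euc n → ℝ //
      ConcaveOn ℝ Set.univ v ∧ ∀ y : Euc n, f y ≤ v y} => v.1 x) :=
    ⟨f x, by rintro _ ⟨v, rfl⟩; exact v.2.2 x⟩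
  apply le_antisymm
  · -- env ≤ inf over p
    apply le_ciInf
    intro p
    -- the affine majorant  w ↦ Cp - ⟪-p, w⟫ ... use Cp := ⨆ z, f z + ⟪p, z⟫
    have hb : BddAbove (Set.range fun z => f z + ⟪p, z⟫) := by
      obtain ⟨C, hC⟩ := hbdd p 0
      refine ⟨C, ?_⟩
      rintro _ ⟨z, rfl⟩
      have := hC ⟨z, rfl⟩
      simpa using this
    set Cp : ℝ := ⨆ z : Euc n, (f z + ⟪p, z⟫) with hCp
    have hmaj : ∀ y, f y ≤ Cp - ⟪p, y⟫ := by
      intro y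
      have h := le_ciSup hb y
      rw [← hCp] at h
      linarith
    have hle : concaveEnvelope f x ≤ Cp - ⟪p, x⟫ :=
      ciInf_le henv_bdd ⟨fun w => Cp - ⟪p, w⟫, affine_concave p Cp, hmaj⟩
    have heq : Cp - ⟪p, x⟫ = ⨆ z : Euc n, (f z + ⟪p, z - x⟫) := by
      rw [hCp, sub_eq_add_neg, ciSup_add_real _ hb (-⟪p, x⟫)]
      congr 1
      funext z
      rw [inner_sub_right]
      ring
    calc concaveEnvelope f x ≤ Cp - ⟪p, x⟫ := hle
      _ = _ := heq
  · -- inf over p ≤ env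
    apply le_ciInf
    rintro ⟨v, hvconc, hvmaj⟩
    obtain ⟨p, hp⟩ := exists_supergradient hvconc x
    have h1 : (⨆ z : Euc n, (f z + ⟪-p, z - x⟫)) ≤ v x := by
      apply ciSup_le
      intro z
      have := hp z
      have h2 : f z ≤ v z := hvmaj z
      rw [inner_neg_left]
      linarith
    exact le_trans (ciInf_le hPhi_bdd (-p)) h1


lemma ciInf_surj_comp {α β : Type*} {e : α → β} (he : Function.Surjective e) (g : β → ℝ) :
    (⨅ a, g (e a)) = ⨅ b, g b := by
  have h : Set.range (fun a => g (e a)) = Set.range g := by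
    rw [show (fun a => g (e a)) = g ∘ e from rfl, Set.range_comp, he.range_eq, Set.image_univ]
  unfold iInf
  rw [h]

/-- With `f(x) := u_T(x) - ⟨A⁻¹x, x⟩/(2T)` and `f*` its concave envelope,
the projection `u_T^* := S_T^+(S_T^- u_T)` satisfies `u_T^*(x) = f*(x) + ⟨A⁻¹x, x⟩/(2T)`. -/
theorem semiconcave_envelope_eq_concave_envelope
    {n : ℕ} (hn : 0 < n) (T : ℝ) (hT : 0 < T)
    (A : Matrix (Fin n) (Fin n) ℝ) (hA : A.PosDef)
    (uT : Euc n → ℝ) (huT : IsLip uT) :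
    ∀ x : Euc n,
      SplusQ T A (SminusQ T A uT) x =
        concaveEnvelope (fun y => uT y - quadA A⁻¹ y / (2 * T)) x +
          quadA A⁻¹ x / (2 * T) := by
  intro x
  obtain ⟨K, hK⟩ := huT
  have hB : (A⁻¹).PosDef := hA.inv
  have hBH : (A⁻¹).IsHermitian := hB.1
  obtain ⟨m, hm, hcoer⟩ := quadA_coercive hn hB
  set B := A⁻¹ with hBdef
  set L := Matrix.toEuclideanLin B with hL
  set f : Euc n → ℝ := fun y => uT y - quadA B y / (2 * T) with hf
  have hLip : ∀ z : Euc n, uT z ≤ uT 0 + K * ‖z‖ := by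
    intro z
    have h := hK.dist_le_mul z 0
    rw [Real.dist_eq, dist_zero_right] at h
    linarith [(abs_le.mp h).2]
  have hKnn : (0:ℝ) ≤ K := K.coe_nonneg
  have hm' : (0:ℝ) < m / (2 * T) := by positivity
  -- boundedness of the inner suprema
  have hbdd : ∀ p w : Euc n, BddAbove (Set.range fun z => f z + ⟪p, z - w⟫) := by
    intro p w
    apply bdd_of_bound (uT 0 + ‖p‖ * ‖w‖ + (K + ‖p‖) ^ 2 / (4 * (m / (2 * T))))
    intro z
    have h1 := hLip z
    have h2 := hcoer z
    have h3 : ⟪p, z - w⟫ ≤ ‖p‖ * ‖z - w‖ := real_inner_le_norm p (z - w)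
    have h4 : ‖p‖ * ‖z - w‖ ≤ ‖p‖ * (‖z‖ + ‖w‖) :=
      mul_le_mul_of_nonneg_left (norm_sub_le z w) (norm_nonneg p)
    have h5 := quad_bound (K + ‖p‖) (m / (2 * T)) ‖z‖ hm'
    have h6 : m / (2 * T) * ‖z‖ ^ 2 ≤ quadA B z / (2 * T) := by
      rw [← mul_div_right_comm]
      exact (div_le_div_iff_of_pos_right (by positivity)).mpr h2
    have hexp1 : (K + ‖p‖) * ‖z‖ = K * ‖z‖ + ‖p‖ * ‖z‖ := by ring
    have hexp2 : ‖p‖ * (‖z‖ + ‖w‖) = ‖p‖ * ‖z‖ + ‖p‖ * ‖w‖ := by ring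
    simp only [hf]
    linarith
  have hbddA : ∀ y : Euc n, BddAbove (Set.range fun z => uT z - quadA B (z - y) / (2 * T)) := by
    intro y
    apply bdd_of_bound (uT 0 + K * ‖y‖ + K ^ 2 / (4 * (m / (2 * T))))
    intro z
    have h1 := hLip z
    have h2 := hcoer (z - y)
    have h6 : m / (2 * T) * ‖z - y‖ ^ 2 ≤ quadA B (z - y) / (2 * T) := by
      rw [← mul_div_right_comm]
      exact (div_le_div_iff_of_pos_right (by positivity)).mpr h2
    have h5 := quad_bound K (m / (2 * T)) ‖z - y‖ hm'
    have h7 : ‖z‖ ≤ ‖z - y‖ + ‖y‖ := by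
      calc ‖z‖ = ‖(z - y) + y‖ := by rw [sub_add_cancel]
        _ ≤ _ := norm_add_le _ _
    have h8 : K * ‖z‖ ≤ K * (‖z - y‖ + ‖y‖) := mul_le_mul_of_nonneg_left h7 hKnn
    have hexp : K * (‖z - y‖ + ‖y‖) = K * ‖z - y‖ + K * ‖y‖ := by ring
    linarith
  set e : Euc n → Euc n := fun y => (1 / T) • L y with he
  have hident : ∀ y z : Euc n,
      uT z - quadA B (z - y) / (2 * T) + quadA B (x - y) / (2 * T)
        = f z + ⟪e y, z - x⟫ + quadA B x / (2 * T) := by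
    intro y z
    have e1 := quadA_sub hBH z y
    have e2 := quadA_sub hBH x y
    have s1 : ⟪L y, z⟫ = ⟪L z, y⟫ := by rw [quadA_inner_sym hBH y z, real_inner_comm]
    have s2 : ⟪L y, x⟫ = ⟪L x, y⟫ := by rw [quadA_inner_sym hBH y x, real_inner_comm]
    have hi : ⟪e y, z - x⟫ = (1 / T) * (⟪L y, z⟫ - ⟪L y, x⟫) := by
      rw [he]
      simp only [real_inner_smul_left, inner_sub_right]
      ring
    simp only [hf]
    rw [hi, s1, s2, e1, e2]
    field_simp
    ring
  have hPhi_lb : ∀ y : Euc n, f x ≤ ⨆ z : Euc n, (f z + ⟪e y, z - x⟫) := by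
    intro y
    have h := le_ciSup (hbdd (e y) x) x
    simpa using h
  have hbddlow : BddBelow (Set.range fun y : Euc n => ⨆ z : Euc n, (f z + ⟪e y, z - x⟫)) :=
    ⟨f x, by rintro _ ⟨y, rfl⟩; exact hPhi_lb y⟩
  have hsurj : Function.Surjective e := by
    intro p
    obtain ⟨w, hw⟩ := toEuclideanLin_surj hB (T • p)
    refine ⟨w, ?_⟩
    rw [he]
    show (1 / T) • L w = p
    rw [← hL] at hw
    rw [hw, smul_smul, one_div, inv_mul_cancel₀ hT.ne', one_smul]
  calc SplusQ T A (SminusQ T A uT) x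
      = ⨅ y : Euc n, ((⨆ z : Euc n, (f z + ⟪e y, z - x⟫)) + quadA B x / (2 * T)) := by
        rw [SplusQ]
        congr 1
        funext y
        rw [SminusQ, ciSup_add_real _ (hbddA y) (quadA B (x - y) / (2 * T)),
          show (fun z => uT z - quadA B (z - y) / (2 * T) + quadA B (x - y) / (2 * T))
            = fun z => (f z + ⟪e y, z - x⟫) + quadA B x / (2 * T) from funext (hident y),
          ← ciSup_add_real _ (hbdd (e y) x) (quadA B x / (2 * T))]
    _ = (⨅ y : Euc n, ⨆ z : Euc n, (f z + ⟪e y, z - x⟫)) + quadA B x / (2 * T) := by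
        rw [ciInf_add_real _ hbddlow (quadA B x / (2 * T))]
    _ = (⨅ p : Euc n, ⨆ z : Euc n, (f z + ⟪p, z - x⟫)) + quadA B x / (2 * T) := by
        rw [ciInf_surj_comp hsurj (fun p => ⨆ z : Euc n, (f z + ⟪p, z - x⟫))]
    _ = concaveEnvelope f x + quadA B x / (2 * T) := by
        rw [env_eq_inf_sup f hbdd x]
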